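/- In R = Q[x_1,...,x_9], the ideal I = (x_1x_2, x_1x_3, x_2x_4, x_4x_5, x_4x_6, x_6x_7, x_6x_8, x_6x_9) satisfies Rad I = Rad(x_2x_4, x_1x_2 + x_4x_6, x_4x_5 + x_6x_7, x_1x_3, x_6x_8, x_6x_9); in particular ara I ≤ 6. -/
import Mathlib


open MvPolynomial

/-- The arithmetical rank of an ideal: the least number of elements generating it up to
radical. -/
noncomputable def ara {R : Type*} [CommRing R] (J : Ideal R) : ℕ :=
  sInf {s : ℕ | ∃ f : Fin s → R,
    Ideal.radical (Ideal.span (Set.range f)) = Ideal.radical J}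

-- The variables `x_1, …, x_9` are `X 0, …, X 8`.
theorem example2 (I : Ideal (MvPolynomial (Fin 9) ℚ))
    (hI : I = Ideal.span
      {X 0 * X 1, X 0 * X 2, X 1 * X 3, X 3 * X 4, X 3 * X 5, X 5 * X 6, X 5 * X 7,
        X 5 * X 8}) :
    Ideal.radical I = Ideal.radical (Ideal.span
      {X 1 * X 3, X 0 * X 1 + X 3 * X 5, X 3 * X 4 + X 5 * X 6, X 0 * X 2, X 5 * X 7,
        X 5 * X 8}) ∧ ara I ≤ 6 := by
  set R := MvPolynomial (Fin 9) ℚ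
  set J : Ideal R := Ideal.span
      {X 1 * X 3, X 0 * X 1 + X 3 * X 5, X 3 * X 4 + X 5 * X 6, X 0 * X 2, X 5 * X 7,
        X 5 * X 8} with hJ
  -- generators of J
  have g1 : (X 1 * X 3 : R) ∈ J := Ideal.subset_span (by simp)
  have g2 : (X 0 * X 1 + X 3 * X 5 : R) ∈ J := Ideal.subset_span (by simp)
  have g3 : (X 3 * X 4 + X 5 * X 6 : R) ∈ J := Ideal.subset_span (by simp)
  have g4 : (X 0 * X 2 : R) ∈ J := Ideal.subset_span (by simp)
  have g5 : (X 5 * X 7 : R) ∈ J := Ideal.subset_span (by simp)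
  have g6 : (X 5 * X 8 : R) ∈ J := Ideal.subset_span (by simp)
  have key : ∀ x : R, x ^ 2 ∈ J.radical → x ∈ J.radical := by
    intro x hx
    have : x ∈ J.radical.radical := ⟨2, hx⟩
    rwa [Ideal.radical_idem] at this
  have h35 : (X 3 * X 5 : R) ∈ J.radical := by
    apply key
    have heq : (X 3 * X 5 : R) ^ 2 =
        X 3 * X 5 * (X 0 * X 1 + X 3 * X 5) - X 0 * X 5 * (X 1 * X 3) := by ring
    rw [heq]
    exact Ideal.le_radical (sub_mem (Ideal.mul_mem_left _ _ g2) (Ideal.mul_mem_left _ _ g1))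
  have h01 : (X 0 * X 1 : R) ∈ J.radical := by
    have heq : (X 0 * X 1 : R) = (X 0 * X 1 + X 3 * X 5) - X 3 * X 5 := by ring
    rw [heq]
    exact sub_mem (Ideal.le_radical g2) h35
  have h56 : (X 5 * X 6 : R) ∈ J.radical := by
    apply key
    have heq : (X 5 * X 6 : R) ^ 2 =
        X 5 * X 6 * (X 3 * X 4 + X 5 * X 6) - X 4 * X 6 * (X 3 * X 5) := by ring
    rw [heq]
    exact sub_mem (Ideal.le_radical (Ideal.mul_mem_left _ _ g3)) (Ideal.mul_mem_left _ _ h35)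
  have h34 : (X 3 * X 4 : R) ∈ J.radical := by
    have heq : (X 3 * X 4 : R) = (X 3 * X 4 + X 5 * X 6) - X 5 * X 6 := by ring
    rw [heq]
    exact sub_mem (Ideal.le_radical g3) h56
  have hIrJ : I ≤ J.radical := by
    rw [hI, Ideal.span_le]
    intro x hx
    simp only [Set.mem_insert_iff, Set.mem_singleton_iff] at hx
    rcases hx with rfl | rfl | rfl | rfl | rfl | rfl | rfl | rfl
    · exact h01
    · exact Ideal.le_radical g4
    · exact Ideal.le_radical g1
    · exact h34
    · exact h35
    · exact h56
    · exact Ideal.le_radical g5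
    · exact Ideal.le_radical g6
  have hJI : J ≤ I := by
    rw [hI, hJ, Ideal.span_le]
    intro x hx
    simp only [Set.mem_insert_iff, Set.mem_singleton_iff] at hx
    have m : ∀ y ∈ ({X 0 * X 1, X 0 * X 2, X 1 * X 3, X 3 * X 4, X 3 * X 5, X 5 * X 6,
        X 5 * X 7, X 5 * X 8} : Set R), y ∈ Ideal.span ({X 0 * X 1, X 0 * X 2, X 1 * X 3,
        X 3 * X 4, X 3 * X 5, X 5 * X 6, X 5 * X 7, X 5 * X 8} : Set R) :=
      fun y hy => Ideal.subset_span hy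
    have i0 := Set.mem_insert (X 0 * X 1 : R) {X 0 * X 2, X 1 * X 3, X 3 * X 4, X 3 * X 5, X 5 * X 6, X 5 * X 7, X 5 * X 8}
    have i1 := Set.mem_insert_of_mem (X 0 * X 1 : R) (Set.mem_insert (X 0 * X 2 : R) {X 1 * X 3, X 3 * X 4, X 3 * X 5, X 5 * X 6, X 5 * X 7, X 5 * X 8})
    have i2 := Set.mem_insert_of_mem (X 0 * X 1 : R) (Set.mem_insert_of_mem (X 0 * X 2 : R) (Set.mem_insert (X 1 * X 3 : R) {X 3 * X 4, X 3 * X 5, X 5 * X 6, X 5 * X 7, X 5 * X 8}))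
    have i3 := Set.mem_insert_of_mem (X 0 * X 1 : R) (Set.mem_insert_of_mem (X 0 * X 2 : R) (Set.mem_insert_of_mem (X 1 * X 3 : R) (Set.mem_insert (X 3 * X 4 : R) {X 3 * X 5, X 5 * X 6, X 5 * X 7, X 5 * X 8})))
    have i4 := Set.mem_insert_of_mem (X 0 * X 1 : R) (Set.mem_insert_of_mem (X 0 * X 2 : R) (Set.mem_insert_of_mem (X 1 * X 3 : R) (Set.mem_insert_of_mem (X 3 * X 4 : R) (Set.mem_insert (X 3 * X 5 : R) {X 5 * X 6, X 5 * X 7, X 5 * X 8}))))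
    have i5 := Set.mem_insert_of_mem (X 0 * X 1 : R) (Set.mem_insert_of_mem (X 0 * X 2 : R) (Set.mem_insert_of_mem (X 1 * X 3 : R) (Set.mem_insert_of_mem (X 3 * X 4 : R) (Set.mem_insert_of_mem (X 3 * X 5 : R) (Set.mem_insert (X 5 * X 6 : R) {X 5 * X 7, X 5 * X 8})))))
    have i6 := Set.mem_insert_of_mem (X 0 * X 1 : R) (Set.mem_insert_of_mem (X 0 * X 2 : R) (Set.mem_insert_of_mem (X 1 * X 3 : R) (Set.mem_insert_of_mem (X 3 * X 4 : R) (Set.mem_insert_of_mem (X 3 * X 5 : R) (Set.mem_insert_of_mem (X 5 * X 6 : R) (Set.mem_insert (X 5 * X 7 : R) {X 5 * X 8}))))))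
    have i7 := Set.mem_insert_of_mem (X 0 * X 1 : R) (Set.mem_insert_of_mem (X 0 * X 2 : R) (Set.mem_insert_of_mem (X 1 * X 3 : R) (Set.mem_insert_of_mem (X 3 * X 4 : R) (Set.mem_insert_of_mem (X 3 * X 5 : R) (Set.mem_insert_of_mem (X 5 * X 6 : R) (Set.mem_insert_of_mem (X 5 * X 7 : R) (Set.mem_singleton (X 5 * X 8 : R))))))))
    rcases hx with rfl | rfl | rfl | rfl | rfl | rfl
    · exact m _ i2
    · exact add_mem (m _ i0) (m _ i4)
    · exact add_mem (m _ i3) (m _ i5)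
    · exact m _ i1
    · exact m _ i6
    · exact m _ i7
  have heq : I.radical = J.radical := by
    apply le_antisymm
    · rw [← Ideal.radical_idem J]
      exact Ideal.radical_mono hIrJ
    · exact Ideal.radical_mono hJI
  refine ⟨heq, ?_⟩
  apply Nat.sInf_le
  refine ⟨![X 1 * X 3, X 0 * X 1 + X 3 * X 5, X 3 * X 4 + X 5 * X 6, X 0 * X 2, X 5 * X 7,
      X 5 * X 8], ?_⟩
  have hsp : Ideal.span (Set.range ![(X 1 * X 3 : R), X 0 * X 1 + X 3 * X 5,
      X 3 * X 4 + X 5 * X 6, X 0 * X 2, X 5 * X 7, X 5 * X 8]) = J := by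
    apply le_antisymm
    · rw [Ideal.span_le]
      rintro y ⟨i, rfl⟩
      fin_cases i
      exacts [g1, g2, g3, g4, g5, g6]
    · rw [hJ, Ideal.span_le]
      intro y hy
      simp only [Set.mem_insert_iff, Set.mem_singleton_iff] at hy
      rcases hy with rfl | rfl | rfl | rfl | rfl | rfl
      · exact Ideal.subset_span ⟨0, rfl⟩
      · exact Ideal.subset_span ⟨1, rfl⟩
      · exact Ideal.subset_span ⟨2, rfl⟩
      · exact Ideal.subset_span ⟨3, rfl⟩
      · exact Ideal.subset_span ⟨4, rfl⟩
      · exact Ideal.subset_span ⟨5, rfl⟩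
  rw [hsp, heq]
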